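/- In SL₂(𝔽_q) with q odd, the number of p-regular conjugacy classes (classes of elements of order prime to p, where q = p^e) is exactly q: they are represented by ±I together with the companion matrices of the polynomials T² − bT + 1 for b ∈ 𝔽_q \ {2, −2}. -/

import Mathlib

open Matrix

def companionSL (F : Type*) [Field F] (b : F) :
    Matrix.SpecialLinearGroup (Fin 2) F :=
  ⟨!![0, -1; 1, b], by simp [Matrix.det_fin_two_of]⟩

open Polynomial

section Helpers


lemma quad_rep {F : Type*} [Field F] [Fintype F] (hodd : Fintype.card F % 2 = 1)
    (h2 : (2 : F) ≠ 0) (a b c : F) (hd : b ^ 2 - 4 * (a * c) ≠ 0) :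
    ∃ x y, a * x ^ 2 + b * (x * y) + c * y ^ 2 = 1 := by
  have h4 : (4 : F) ≠ 0 := by
    have : (4 : F) = 2 * 2 := by norm_num
    rw [this]; exact mul_ne_zero h2 h2
  rcases eq_or_ne a 0 with ha | ha
  · subst ha
    have hb : b ≠ 0 := by
      intro h; apply hd; rw [h]; ring
    refine ⟨(1 - c) / b, 1, ?_⟩
    field_simp
    ring
  · have h4a : (4 : F) * a ≠ 0 := mul_ne_zero h4 ha
    set c' : F := c - b ^ 2 / (4 * a) with hc'def
    have hc' : c' ≠ 0 := by
      intro h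
      apply hd
      rw [hc'def] at h
      field_simp at h
      linear_combination -h
    obtain ⟨u, v, huv⟩ := FiniteField.exists_root_sum_quadratic
      (f := C a * X ^ 2 + C 0 * X + C (-1)) (g := C c' * X ^ 2 + C 0 * X + C 0)
      (Polynomial.degree_quadratic ha) (Polynomial.degree_quadratic hc') hodd
    simp only [eval_add, eval_mul, eval_pow, eval_C, eval_X, zero_mul, add_zero, mul_zero] at huv
    refine ⟨u - b / (2 * a) * v, v, ?_⟩
    have key : a * u ^ 2 + c' * v ^ 2 = 1 := by linear_combination huv
    have expand : a * (u - b / (2 * a) * v) ^ 2 + b * ((u - b / (2 * a) * v) * v) + c * v ^ 2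
        = a * u ^ 2 + c' * v ^ 2 := by
      rw [hc'def]
      field_simp
      ring
    rw [expand, key]


lemma ch2 {R : Type*} [CommRing R] (M : Matrix (Fin 2) (Fin 2) R) :
    M * M = M.trace • M - M.det • 1 := by
  ext i j
  fin_cases i <;> fin_cases j <;>
    simp [Matrix.mul_apply, Matrix.trace_fin_two, Matrix.det_fin_two, Fin.sum_univ_two,
      Matrix.one_apply] <;> ring

lemma order_coprime {p e : ℕ} (hp : p.Prime) (he : 0 < e)
    {F : Type*} [Field F] [Fintype F] (hcard : Fintype.card F = p ^ e)
    (g : SpecialLinearGroup (Fin 2) F)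
    (h2 : Matrix.trace (g : Matrix (Fin 2) (Fin 2) F) ≠ 2)
    (h2' : Matrix.trace (g : Matrix (Fin 2) (Fin 2) F) ≠ -2) :
    Nat.Coprime (orderOf g) p := by
  set M : Matrix (Fin 2) (Fin 2) F := (g : Matrix (Fin 2) (Fin 2) F) with hM
  set t : F := Matrix.trace M with htdef
  let K := Polynomial.SplittingField (C 1 * X ^ 2 + C (-t) * X + C 1 : F[X])
  have : Finite K := Module.finite_of_finite F
  have : Fintype K := Fintype.ofFinite K
  have hdeg : (C 1 * X ^ 2 + C (-t) * X + C 1 : F[X]).degree = 2 :=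
    Polynomial.degree_quadratic one_ne_zero
  obtain ⟨α, hα⟩ := Polynomial.Splits.exists_eval_eq_zero
    (Polynomial.SplittingField.splits (C 1 * X ^ 2 + C (-t) * X + C 1 : F[X]))
    (by rw [degree_map, hdeg]; exact two_ne_zero)
  rw [eval_map] at hα
  simp only [eval₂_add, eval₂_mul, eval₂_pow, eval₂_neg, eval₂_C, eval₂_X, eval₂_one, _root_.map_one, map_neg, one_mul] at hα
  set t' : K := algebraMap F K t with ht'def
  -- hα : α ^ 2 + -t' * α + 1 = 0
  set β : K := t' - α with hβdef
  have hmul : α * β = 1 := by rw [hβdef]; linear_combination -hα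
  have hα0 : α ≠ 0 := fun h => by simp [h] at hmul
  have hβ0 : β ≠ 0 := fun h => by simp [h] at hmul
  have hne : α ≠ β := by
    intro h
    rw [hβdef] at h
    have hsq : (α - 1) * (α + 1) = 0 := by linear_combination -hα + α * h
    rcases mul_eq_zero.mp hsq with h1 | h1
    · have hα1 : α = 1 := by linear_combination h1
      have ht2 : (algebraMap F K) t = (algebraMap F K) 2 := by
        rw [map_ofNat, ← ht'def]
        linear_combination -h + 2 * hα1
      exact h2 ((algebraMap F K).injective ht2)
    · have hα1 : α = -1 := by linear_combination h1
      have ht2 : (algebraMap F K) t = (algebraMap F K) (-2) := by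
        simp only [map_neg, map_ofNat, ← ht'def]
        linear_combination -h + 2 * hα1
      exact h2' ((algebraMap F K).injective ht2)
  -- move to matrices over K
  set A : Matrix (Fin 2) (Fin 2) K := M.map (algebraMap F K) with hAdef
  have hAtr : A.trace = t' := by
    rw [ht'def, hAdef, Matrix.trace_fin_two]
    have h1 : t = M 0 0 + M 1 1 := htdef.trans (Matrix.trace_fin_two M)
    rw [Matrix.map_apply, Matrix.map_apply, ← map_add]
    exact congrArg _ h1.symm
  have hAdet : A.det = 1 := by
    have h := RingHom.map_det (algebraMap F K) M
    rw [RingHom.mapMatrix_apply] at h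
    have hMdet : M.det = 1 := by rw [hM]; exact g.prop
    rw [hAdef, ← h, hMdet, _root_.map_one]
  have hA : A * A = t' • A - 1 := by
    rw [ch2 A, hAtr, hAdet, one_smul]
  have hsub : α - β ≠ 0 := sub_ne_zero.mpr hne
  set u : Matrix (Fin 2) (Fin 2) K := (α - β)⁻¹ • (A - β • 1) with hudef
  set v : Matrix (Fin 2) (Fin 2) K := (α - β)⁻¹ • (α • (1 : Matrix (Fin 2) (Fin 2) K) - A) with hvdef
  have huv : u + v = 1 := by
    rw [hudef, hvdef, ← smul_add]
    have h1 : (A - β • 1) + (α • (1 : Matrix (Fin 2) (Fin 2) K) - A)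
        = (α - β) • (1 : Matrix (Fin 2) (Fin 2) K) := by module
    rw [h1, smul_smul, inv_mul_cancel₀ hsub, one_smul]
  have ht'αβ : t' = α + β := by rw [hβdef]; ring
  have hAu : A * u = α • u := by
    rw [hudef, mul_smul_comm, mul_sub, hA, mul_smul_comm, mul_one, ht'αβ]
    rw [smul_comm]
    congr 1
    have h1 : (1 : Matrix (Fin 2) (Fin 2) K) = (α * β) • 1 := by rw [hmul, one_smul]
    nth_rewrite 1 [h1]
    module
  have hAv : A * v = β • v := by
    rw [hvdef, mul_smul_comm, mul_sub, hA, mul_smul_comm, mul_one, ht'αβ]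
    rw [smul_comm]
    congr 1
    have h1 : (1 : Matrix (Fin 2) (Fin 2) K) = (α * β) • 1 := by rw [hmul, one_smul]
    nth_rewrite 1 [h1]
    module
  have key : ∀ n : ℕ, A ^ n = α ^ n • u + β ^ n • v := by
    intro n
    induction n with
    | zero => simp [huv]
    | succ n ih =>
        rw [pow_succ', ih, mul_add, mul_smul_comm (α ^ n) A u, mul_smul_comm (β ^ n) A v,
          hAu, hAv, smul_smul (α ^ n) α u, smul_smul (β ^ n) β v, ← pow_succ α n, ← pow_succ β n]
  set m : ℕ := Fintype.card K - 1 with hmdef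
  have hαn : α ^ m = 1 := FiniteField.pow_card_sub_one_eq_one α hα0
  have hβn : β ^ m = 1 := FiniteField.pow_card_sub_one_eq_one β hβ0
  have hApow : A ^ m = 1 := by rw [key m, hαn, hβn, one_smul, one_smul, huv]
  have hMpow : M ^ m = 1 := by
    have h1 : (M ^ m).map (algebraMap F K) = (1 : Matrix (Fin 2) (Fin 2) F).map (algebraMap F K) := by
      have e1 : (M ^ m).map (algebraMap F K) = A ^ m := by
        rw [← RingHom.mapMatrix_apply, map_pow, RingHom.mapMatrix_apply, ← hAdef]
      have e2 : (1 : Matrix (Fin 2) (Fin 2) F).map (algebraMap F K) = 1 :=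
        Matrix.map_one _ (map_zero _) (_root_.map_one _)
      rw [e1, e2, hApow]
    exact Matrix.map_injective (algebraMap F K).injective h1
  have hgpow : g ^ m = 1 := by
    rw [hM] at hMpow
    exact Subtype.coe_injective hMpow
  have hdvd : orderOf g ∣ m := orderOf_dvd_of_pow_eq_one hgpow
  have hcardK : Fintype.card K = p ^ (e * Module.finrank F K) := by
    rw [Module.card_eq_pow_finrank (K := F) (V := K), hcard, ← pow_mul]
  have hfr : 0 < Module.finrank F K := Module.finrank_pos
  have hppow : 1 ≤ p ^ (e * Module.finrank F K) :=
    Nat.one_le_pow _ _ (by have := hp.two_le; omega)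
  have hcop : Nat.Coprime m p := by
    rw [hmdef, hcardK]
    refine Nat.Coprime.symm ((hp.coprime_iff_not_dvd).mpr ?_)
    intro hdvd'
    have h1 : p ∣ p ^ (e * Module.finrank F K) :=
      dvd_pow_self p (by have := hfr; have := he; positivity)
    have heq : p ^ (e * Module.finrank F K) - (p ^ (e * Module.finrank F K) - 1) = 1 := by omega
    have h2 : p ∣ 1 := heq ▸ Nat.dvd_sub h1 hdvd'
    have := Nat.le_of_dvd one_pos h2
    have := hp.two_le
    omega
  exact Nat.Coprime.coprime_dvd_left hdvd hcop


lemma charp_of_card {F : Type*} [Field F] [Fintype F] {p e : ℕ} (hp : p.Prime) (he : 0 < e)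
    (hcard : Fintype.card F = p ^ e) : CharP F p := by
  have h1 : CharP F (ringChar F) := ringChar.charP F
  obtain ⟨n, hr, hcard'⟩ := FiniteField.card F (ringChar F)
  have hdvd : p ∣ ringChar F ^ (n : ℕ) := by
    rw [← hcard', hcard]
    exact dvd_pow_self p he.ne'
  have : p = ringChar F := (Nat.prime_dvd_prime_iff_eq hp hr).mp (hp.dvd_of_dvd_pow hdvd)
  exact this ▸ h1

lemma pow_trace_two {F : Type*} [Field F] (M : Matrix (Fin 2) (Fin 2) F)
    (ht : M.trace = 2) (hd : M.det = 1) (n : ℕ) :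
    M ^ n = 1 + (n : F) • (M - 1) := by
  have hMM : M * (M - 1) = M - 1 := by
    rw [mul_sub, ch2 M, ht, hd, one_smul, mul_one, two_smul]
    abel
  induction n with
  | zero => simp
  | succ n ih =>
      rw [pow_succ', ih, mul_add, mul_one, mul_smul_comm, hMM, Nat.cast_succ, add_smul, one_smul]
      abel

lemma eq_one_of_trace_two {F : Type*} [Field F] {p : ℕ} (hp : p.Prime) [CharP F p]
    (g : SpecialLinearGroup (Fin 2) F)
    (ht : Matrix.trace (g : Matrix (Fin 2) (Fin 2) F) = 2)
    (hco : Nat.Coprime (orderOf g) p) : g = 1 := by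
  have hMp : (g : Matrix (Fin 2) (Fin 2) F) ^ p = 1 := by
    rw [pow_trace_two _ ht g.prop p, CharP.cast_eq_zero F p, zero_smul, add_zero]
  have hgp : g ^ p = 1 := Subtype.coe_injective hMp
  have hdvd : orderOf g ∣ p := orderOf_dvd_of_pow_eq_one hgp
  have h1 : orderOf g ∣ 1 := hco ▸ Nat.dvd_gcd dvd_rfl hdvd
  exact orderOf_eq_one_iff.mp (Nat.dvd_one.mp h1)

lemma eq_neg_one_of_trace_neg_two {F : Type*} [Field F] {p : ℕ} (hp : p.Prime) (hodd : Odd p)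
    [CharP F p] (g : SpecialLinearGroup (Fin 2) F)
    (ht : Matrix.trace (g : Matrix (Fin 2) (Fin 2) F) = -2)
    (hco : Nat.Coprime (orderOf g) p) : g = -1 := by
  have hp2 : p ≠ 2 := by rintro rfl; simp [Nat.odd_iff] at hodd
  have h2 : (2 : F) ≠ 0 := by
    intro h
    exact hp2 ((Nat.prime_dvd_prime_iff_eq hp Nat.prime_two).mp
      ((CharP.cast_eq_zero_iff F p 2).mp (by exact_mod_cast h)))
  set M : Matrix (Fin 2) (Fin 2) F := (g : Matrix (Fin 2) (Fin 2) F) with hM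
  have hMdet : M.det = 1 := g.prop
  have htN : (-M).trace = 2 := by rw [Matrix.trace_neg, ht]; ring
  have hdN : (-M).det = 1 := by simp [Matrix.det_neg, hMdet]
  have hNp : (-M) ^ p = 1 := by
    rw [pow_trace_two _ htN hdN p, CharP.cast_eq_zero F p, zero_smul, add_zero]
  have hMp : M ^ p = -1 := by
    rw [hodd.neg_pow] at hNp
    rw [← neg_neg (M ^ p), hNp]
  have hgp : g ^ p = -1 := Subtype.coe_injective hMp
  have hg2p : g ^ (2 * p) = 1 := by
    rw [mul_comm, pow_mul, hgp, neg_one_sq]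
  have hdvd : orderOf g ∣ 2 * p := orderOf_dvd_of_pow_eq_one hg2p
  have hdvd2 : orderOf g ∣ 2 := Nat.Coprime.dvd_of_dvd_mul_right hco hdvd
  have hg2 : g ^ 2 = 1 := orderOf_dvd_iff_pow_eq_one.mp hdvd2
  have hM2 : M ^ 2 = 1 := Subtype.ext_iff.mp hg2
  rw [pow_two] at hM2
  have h3 : (-2 : F) • M - 1 = 1 := by
    have hc := ch2 M
    rw [ht, hMdet, one_smul] at hc
    rw [← hc]; exact hM2
  have h4 : (2 : F) • (M + 1) = 0 := by
    have hb : (2 : F) • (M + 1) = -((-2 : F) • M - 1) + 1 := by module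
    rw [hb, h3]; exact neg_add_cancel 1
  rcases smul_eq_zero.mp h4 with h | h
  · exact absurd h h2
  · exact Subtype.coe_injective (eq_neg_of_add_eq_zero_left h)



lemma trace_companionSL {F : Type*} [Field F] (b : F) :
    Matrix.trace (companionSL F b : Matrix (Fin 2) (Fin 2) F) = b := by
  simp [companionSL, Matrix.trace_fin_two]

lemma trace_conj_inv {F : Type*} [Field F] {g h : SpecialLinearGroup (Fin 2) F}
    (hc : ConjClasses.mk g = ConjClasses.mk h) :
    Matrix.trace (g : Matrix (Fin 2) (Fin 2) F) = Matrix.trace (h : Matrix (Fin 2) (Fin 2) F) := by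
  obtain ⟨c, hc⟩ := isConj_iff.mp (ConjClasses.mk_eq_mk_iff_isConj.mp hc)
  have : (h : Matrix (Fin 2) (Fin 2) F) = (c : Matrix (Fin 2) (Fin 2) F) * g * (c⁻¹ : SpecialLinearGroup (Fin 2) F) := by
    rw [← hc]; rfl
  rw [this, Matrix.trace_mul_comm]
  rw [← Matrix.mul_assoc]
  have h1 : ((c⁻¹ : SpecialLinearGroup (Fin 2) F) : Matrix (Fin 2) (Fin 2) F) * c = 1 := by
    have := Matrix.SpecialLinearGroup.coe_mul (c⁻¹) c
    rw [inv_mul_cancel] at this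
    rw [← this]; rfl
  rw [h1, Matrix.one_mul]

lemma conj_to_companion {F : Type*} [Field F] [Fintype F] (hcodd : Fintype.card F % 2 = 1)
    (h2 : (2 : F) ≠ 0) (g : SpecialLinearGroup (Fin 2) F)
    (ht2 : Matrix.trace (g : Matrix (Fin 2) (Fin 2) F) ≠ 2)
    (ht2' : Matrix.trace (g : Matrix (Fin 2) (Fin 2) F) ≠ -2) :
    ConjClasses.mk g
      = ConjClasses.mk (companionSL F (Matrix.trace (g : Matrix (Fin 2) (Fin 2) F))) := by
  set M : Matrix (Fin 2) (Fin 2) F := (g : Matrix (Fin 2) (Fin 2) F) with hM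
  set a : F := M 0 0 with ha
  set b : F := M 0 1 with hb
  set c : F := M 1 0 with hc
  set d : F := M 1 1 with hd
  have htr : Matrix.trace M = a + d := Matrix.trace_fin_two M
  have hdet : a * d - b * c = 1 := by
    have := g.prop
    rw [Matrix.det_fin_two] at this
    exact this
  -- discriminant nonzero
  have hdisc : (d - a) ^ 2 - 4 * (c * (-b)) ≠ 0 := by
    have h1 : (d - a) ^ 2 - 4 * (c * (-b)) = (a + d - 2) * (a + d + 2) + 4 - 4 * (a * d - b * c) := by
      ring
    rw [h1, hdet]
    intro hzero
    rcases mul_eq_zero.mp (show (a + d - 2) * (a + d + 2) = 0 by linear_combination hzero) with h | h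
    · exact ht2 (by rw [htr]; linear_combination h)
    · exact ht2' (by rw [htr]; linear_combination h)
  obtain ⟨x, y, hxy⟩ := quad_rep hcodd h2 c (d - a) (-b) hdisc
  set P : Matrix (Fin 2) (Fin 2) F := !![x, a * x + b * y; y, c * x + d * y] with hP
  have hPdet : P.det = 1 := by
    rw [hP, Matrix.det_fin_two_of]
    linear_combination hxy
  set Psl : SpecialLinearGroup (Fin 2) F := ⟨P, hPdet⟩ with hPsl
  have hkey : M * P = P * (companionSL F (Matrix.trace M) : Matrix (Fin 2) (Fin 2) F) := by
    have hcomp : (companionSL F (Matrix.trace M) : Matrix (Fin 2) (Fin 2) F)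
        = !![0, -1; 1, a + d] := by rw [htr]; rfl
    rw [hcomp, hP]
    have hMeta : M = !![a, b; c, d] := by
      rw [ha, hb, hc, hd]
      exact Matrix.eta_fin_two M
    rw [hMeta, Matrix.mul_fin_two, Matrix.mul_fin_two]
    ext i j
    fin_cases i <;> fin_cases j <;> simp
    · linear_combination (-x) * hdet
    · linear_combination (-y) * hdet
  have hslkey : g * Psl = Psl * companionSL F (Matrix.trace M) := by
    apply Subtype.coe_injective
    exact hkey
  apply (ConjClasses.mk_eq_mk_iff_isConj).mpr
  apply isConj_iff.mpr
  refine ⟨Psl⁻¹, ?_⟩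
  rw [inv_inv, mul_assoc, hslkey, ← mul_assoc, inv_mul_cancel, one_mul]

end Helpers

theorem stmt11 (p e : ℕ) (hp : p.Prime) (hodd : Odd p) (he : 0 < e)
    (F : Type*) [Field F] [Fintype F] (hcard : Fintype.card F = p ^ e) :
    {c : ConjClasses (Matrix.SpecialLinearGroup (Fin 2) F) |
        ∃ g, c = ConjClasses.mk g ∧ Nat.Coprime (orderOf g) p} =
      insert (ConjClasses.mk 1)
        (insert (ConjClasses.mk (-1))
          ((fun b => ConjClasses.mk (companionSL F b)) ''
            {b : F | b ≠ 2 ∧ b ≠ -2})) ∧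
    {c : ConjClasses (Matrix.SpecialLinearGroup (Fin 2) F) |
        ∃ g, c = ConjClasses.mk g ∧ Nat.Coprime (orderOf g) p}.ncard = p ^ e := by
  haveI hchar : CharP F p := charp_of_card hp he hcard
  have hp2 : p ≠ 2 := by rintro rfl; simp [Nat.odd_iff] at hodd
  have h2F : (2 : F) ≠ 0 := by
    intro h
    exact hp2 ((Nat.prime_dvd_prime_iff_eq hp Nat.prime_two).mp
      ((CharP.cast_eq_zero_iff F p 2).mp (by exact_mod_cast h)))
  have hcodd : Fintype.card F % 2 = 1 := by
    rw [hcard]; exact Nat.odd_iff.mp (hodd.pow)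
  have h22 : (2 : F) ≠ -2 := by
    intro h
    apply h2F
    have h4 : (2 : F) * 2 = 0 := by linear_combination h
    exact mul_self_eq_zero.mp h4
  have hset : {c : ConjClasses (Matrix.SpecialLinearGroup (Fin 2) F) |
        ∃ g, c = ConjClasses.mk g ∧ Nat.Coprime (orderOf g) p} =
      insert (ConjClasses.mk 1)
        (insert (ConjClasses.mk (-1))
          ((fun b => ConjClasses.mk (companionSL F b)) ''
            {b : F | b ≠ 2 ∧ b ≠ -2})) := by
    ext cl
    simp only [Set.mem_setOf_eq, Set.mem_insert_iff, Set.mem_image]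
    constructor
    · rintro ⟨g, rfl, hco⟩
      rcases eq_or_ne (Matrix.trace (g : Matrix (Fin 2) (Fin 2) F)) 2 with ht | ht
      · left
        rw [eq_one_of_trace_two hp g ht hco]
      · rcases eq_or_ne (Matrix.trace (g : Matrix (Fin 2) (Fin 2) F)) (-2) with ht' | ht'
        · right; left
          rw [eq_neg_one_of_trace_neg_two hp hodd g ht' hco]
        · right; right
          exact ⟨_, ⟨ht, ht'⟩, (conj_to_companion hcodd h2F g ht ht').symm⟩
    · rintro (rfl | rfl | ⟨b, ⟨hb2, hb2'⟩, rfl⟩)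
      · exact ⟨1, rfl, by simp⟩
      · refine ⟨-1, rfl, ?_⟩
        have hord : orderOf (-1 : Matrix.SpecialLinearGroup (Fin 2) F) ∣ 2 :=
          orderOf_dvd_of_pow_eq_one (by rw [neg_one_sq])
        exact Nat.Coprime.coprime_dvd_left hord (Nat.coprime_two_left.mpr hodd)
      · refine ⟨companionSL F b, rfl, ?_⟩
        apply order_coprime hp he hcard
        · rw [trace_companionSL]; exact hb2
        · rw [trace_companionSL]; exact hb2'
  refine ⟨hset, ?_⟩
  rw [hset]
  have htr1 : Matrix.trace ((1 : Matrix.SpecialLinearGroup (Fin 2) F) :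
      Matrix (Fin 2) (Fin 2) F) = 2 := by
    simp [Matrix.trace_fin_two, Matrix.one_apply]
  have htrneg1 : Matrix.trace ((-1 : Matrix.SpecialLinearGroup (Fin 2) F) :
      Matrix (Fin 2) (Fin 2) F) = -2 := by
    rw [SpecialLinearGroup.coe_neg]
    rw [Matrix.trace_neg]
    rw [show ((1 : Matrix.SpecialLinearGroup (Fin 2) F) : Matrix (Fin 2) (Fin 2) F) = 1 from rfl]
    simp [Matrix.trace_fin_two, Matrix.one_apply]
  set im : Set (ConjClasses (Matrix.SpecialLinearGroup (Fin 2) F)) :=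
    (fun b => ConjClasses.mk (companionSL F b)) '' {b : F | b ≠ 2 ∧ b ≠ -2} with him
  have hinj : Set.InjOn (fun b => ConjClasses.mk (companionSL F b))
      {b : F | b ≠ 2 ∧ b ≠ -2} := by
    intro b1 _ b2 _ hEq
    have := trace_conj_inv (g := companionSL F b1) (h := companionSL F b2) hEq
    rwa [trace_companionSL, trace_companionSL] at this
  have hTfin : im.Finite := (Set.toFinite _).image _
  have hmkne : ConjClasses.mk (1 : Matrix.SpecialLinearGroup (Fin 2) F)
      ≠ ConjClasses.mk (-1 : Matrix.SpecialLinearGroup (Fin 2) F) := by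
    intro h
    have := trace_conj_inv h
    rw [htr1, htrneg1] at this
    exact h22 this
  have h1img : ConjClasses.mk (1 : Matrix.SpecialLinearGroup (Fin 2) F) ∉ im := by
    rintro ⟨b, hb, hEq⟩
    have := trace_conj_inv hEq
    rw [trace_companionSL, htr1] at this
    exact hb.1 this
  have hneg1img : ConjClasses.mk (-1 : Matrix.SpecialLinearGroup (Fin 2) F) ∉ im := by
    rintro ⟨b, hb, hEq⟩
    have := trace_conj_inv hEq
    rw [trace_companionSL, htrneg1] at this
    exact hb.2 this
  have hnotmem : ConjClasses.mk (1 : Matrix.SpecialLinearGroup (Fin 2) F)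
      ∉ insert (ConjClasses.mk (-1 : Matrix.SpecialLinearGroup (Fin 2) F)) im := by
    rintro (h | h)
    · exact hmkne h
    · exact h1img h
  rw [Set.ncard_insert_of_notMem hnotmem (hTfin.insert _),
    Set.ncard_insert_of_notMem hneg1img hTfin,
    him, Set.ncard_image_of_injOn hinj]
  have hs : {b : F | b ≠ 2 ∧ b ≠ -2} = ({2, -2} : Set F)ᶜ := by
    ext b
    simp [not_or]
  rw [hs]
  have hpair : ({2, -2} : Set F).ncard = 2 := Set.ncard_pair h22
  have hcompl := Set.ncard_add_ncard_compl ({2, -2} : Set F) (Set.toFinite _)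
  rw [hpair, Nat.card_eq_fintype_card, hcard] at hcompl
  have hp3 : 3 ≤ p := by
    have := hp.two_le
    have := Nat.odd_iff.mp hodd
    omega
  have hpe : 3 ≤ p ^ e := le_trans hp3 (Nat.le_self_pow he.ne' p)
  omega
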